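/- There exists a unique formal power series a(z) = 1 + Σ_{k≥1} a_k z^{-(r+1)k} satisfying S_z^r a(z) = (−z)^r a(z), where the equation is understood coefficientwise in the ring of formal Laurent series. -/

import Mathlib

open HahnSeries Pointwise

/-- The operator `S_z = z^{1-r} ∂_z - (r-1)/(2 z^r) - z` acting on formal Laurent
series with finitely many positive powers of `z`, written in the variable
`t = z⁻¹` (so `coeff m` is the coefficient of `z^{-m}`). -/
noncomputable def Sop (r : ℕ) (f : LaurentSeries ℂ) : LaurentSeries ℂ where
  coeff m := ((r + 1 : ℂ) / 2 - m) * f.coeff (m - r) - f.coeff (m + 1)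
  isPWO_support' := by
    have h : (Function.support fun m : ℤ =>
        ((r + 1 : ℂ) / 2 - m) * f.coeff (m - r) - f.coeff (m + 1))
        ⊆ (f.support + {(r : ℤ)}) ∪ (f.support + ({(-1 : ℤ)} : Set ℤ)) := by
      intro m hm
      simp only [Function.mem_support] at hm
      by_cases h1 : f.coeff (m - (r : ℤ)) = 0
      · have h2 : f.coeff (m + 1) ≠ 0 := fun h2 => hm (by rw [h1, h2]; ring)
        right
        exact Set.mem_add.mpr ⟨m + 1, by simpa using h2, -1, rfl, by ring⟩
      · left
        exact Set.mem_add.mpr ⟨m - r, by simpa using h1, r, rfl, by ring⟩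
    exact ((f.isPWO_support.add (Set.isPWO_singleton (r : ℤ))).union
      (f.isPWO_support.add (Set.isPWO_singleton (-1 : ℤ)))).mono h

/-- The formal adjoint `S_z^⋆ = -z^{1-r} ∂_z + (r-1)/(2 z^r) - z`. -/
noncomputable def Sstar (r : ℕ) (f : LaurentSeries ℂ) : LaurentSeries ℂ where
  coeff m := ((m : ℂ) - (r + 1) / 2) * f.coeff (m - r) - f.coeff (m + 1)
  isPWO_support' := by
    have h : (Function.support fun m : ℤ =>
        ((m : ℂ) - (r + 1) / 2) * f.coeff (m - r) - f.coeff (m + 1))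
        ⊆ (f.support + {(r : ℤ)}) ∪ (f.support + ({(-1 : ℤ)} : Set ℤ)) := by
      intro m hm
      simp only [Function.mem_support] at hm
      by_cases h1 : f.coeff (m - (r : ℤ)) = 0
      · have h2 : f.coeff (m + 1) ≠ 0 := fun h2 => hm (by rw [h1, h2]; ring)
        right
        exact Set.mem_add.mpr ⟨m + 1, by simpa using h2, -1, rfl, by ring⟩
      · left
        exact Set.mem_add.mpr ⟨m - r, by simpa using h1, r, rfl, by ring⟩
    exact ((f.isPWO_support.add (Set.isPWO_singleton (r : ℤ))).union
      (f.isPWO_support.add (Set.isPWO_singleton (-1 : ℤ)))).mono h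

/-- Substitution `z ↦ ω z` on a formal Laurent series (`coeff m` is the
coefficient of `z^{-m}`, which gets multiplied by `ω^{-m}`). -/
noncomputable def rot (ω : ℂ) (f : LaurentSeries ℂ) : LaurentSeries ℂ where
  coeff m := ω ^ (-m) * f.coeff m
  isPWO_support' := f.isPWO_support.mono (fun m hm => by
    simp only [Function.mem_support] at hm ⊢
    exact fun h => hm (by rw [h, mul_zero]))

namespace AHelp

/-- `G r a j n` is (what will be) the coefficient of `(Sop r)^[j] A` at index
`(r+1)*n - j`, where `a n := A.coeff ((r+1)*n)`. -/
noncomputable def G (r : ℕ) (a : ℤ → ℂ) : ℕ → ℤ → ℂ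
  | 0, n => a n
  | (j+1), n =>
      (((r : ℂ) + 1) / 2 - ((((r : ℤ) + 1) * n - (j : ℤ) - 1 : ℤ) : ℂ)) * G r a j (n-1)
        - G r a j n

theorem G_congr (r : ℕ) {a b : ℤ → ℂ} : ∀ (j : ℕ) (n : ℤ),
    (∀ m, n - j ≤ m → m ≤ n → a m = b m) → G r a j n = G r b j n
  | 0, n, h => h n (by simp) le_rfl
  | (j+1), n, h => by
      rw [G, G, G_congr r j (n-1) (fun m h1 h2 => h m (by omega) (by omega)),
        G_congr r j n (fun m h1 h2 => h m (by omega) h2)]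

theorem G_add (r : ℕ) (a b : ℤ → ℂ) : ∀ (j : ℕ) (n : ℤ),
    G r (fun m => a m + b m) j n = G r a j n + G r b j n
  | 0, n => rfl
  | (j+1), n => by rw [G, G, G, G_add r a b j (n-1), G_add r a b j n]; ring

theorem G_of_zero (r : ℕ) {a : ℤ → ℂ} : ∀ (j : ℕ) (n : ℤ),
    (∀ m, n - j ≤ m → m ≤ n → a m = 0) → G r a j n = 0
  | 0, n, h => h n (by simp) le_rfl
  | (j+1), n, h => by
      rw [G, G_of_zero r j (n-1) (fun m h1 h2 => h m (by omega) (by omega)),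
        G_of_zero r j n (fun m h1 h2 => h m (by omega) h2)]
      ring

theorem G_top (r : ℕ) {a : ℤ → ℂ} : ∀ (j : ℕ) (n : ℤ),
    (∀ m, n - j ≤ m → m < n → a m = 0) → G r a j n = (-1)^j * a n
  | 0, n, h => by rw [G]; ring
  | (j+1), n, h => by
      rw [G, G_of_zero r j (n-1) (fun m h1 h2 => h m (by omega) (by omega)),
        G_top r j n (fun m h1 h2 => h m (by omega) h2)]
      ring

/-- The coefficient of `a (n-1)` in `G r a j n`. -/
noncomputable def B (r j : ℕ) (n : ℤ) : ℂ :=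
  (-1)^(j+1) * ((j:ℂ) * (((r:ℂ)+1)/2 - (n:ℂ)*((r:ℂ)+1) + 1) + (j:ℂ)*((j:ℂ)-1)/2)

theorem G_top2 (r : ℕ) {a : ℤ → ℂ} : ∀ (j : ℕ) (n : ℤ),
    (∀ m, n - j ≤ m → m ≤ n - 2 → a m = 0) →
    G r a j n = (-1)^j * a n + B r j n * a (n-1)
  | 0, n, h => by rw [G, B]; push_cast; ring
  | (j+1), n, h => by
      rw [G, G_top r j (n-1) (fun m h1 h2 => h m (by omega) (by omega)),
        G_top2 r j n (fun m h1 h2 => h m (by omega) h2), B, B]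
      push_cast
      ring

theorem G_split (r j : ℕ) (n : ℤ) (a : ℤ → ℂ) :
    G r a j n = (-1)^j * a n + B r j n * a (n-1)
      + G r (fun m => if m ≤ n-2 then a m else 0) j n := by
  set lo : ℤ → ℂ := fun m => if m ≤ n-2 then a m else 0 with hlo
  have hfun : (fun m => (a m - lo m) + lo m) = a := by funext m; ring
  calc G r a j n = G r (fun m => (a m - lo m) + lo m) j n := by rw [hfun]
    _ = G r (fun m => a m - lo m) j n + G r lo j n := G_add r _ _ j n
    _ = ((-1)^j * (a n - lo n) + B r j n * (a (n-1) - lo (n-1))) + G r lo j n := by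
        rw [G_top2 r j n (fun m h1 h2 => by simp only [hlo, if_pos h2]; ring)]
    _ = (-1)^j * a n + B r j n * a (n-1) + G r lo j n := by
        have h1 : lo n = 0 := if_neg (by omega)
        have h2 : lo (n-1) = 0 := if_neg (by omega)
        rw [h1, h2]; ring

theorem B_eq (r : ℕ) (n : ℤ) :
    B r r n = (-1)^(r+1) * r * ((r:ℂ)+1) * (1 - (n:ℂ)) := by
  rw [B]; ring

theorem B_ne (r : ℕ) (hr : 2 ≤ r) {n : ℤ} (hn : 2 ≤ n) : B r r n ≠ 0 := by
  rw [B_eq]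
  have h1 : ((-1:ℂ))^(r+1) ≠ 0 := pow_ne_zero _ (by norm_num)
  have h2 : (r:ℂ) ≠ 0 := Nat.cast_ne_zero.mpr (by omega)
  have h3 : (r:ℂ)+1 ≠ 0 := by
    have : ((r+1 : ℕ) : ℂ) ≠ 0 := Nat.cast_ne_zero.mpr (by omega)
    push_cast at this; exact this
  have h4 : (1:ℂ) - (n:ℂ) ≠ 0 := by
    rw [sub_ne_zero]
    intro h
    have : (n:ℤ) = 1 := by exact_mod_cast h.symm
    omega
  exact mul_ne_zero (mul_ne_zero (mul_ne_zero h1 h2) h3) h4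


/-- The levels of the unique solution, defined by the forced recursion. -/
noncomputable def lev (r : ℕ) : ℕ → ℂ
  | 0 => 1
  | (k+1) =>
      - G r (fun m => if h : 0 ≤ m ∧ m ≤ (k:ℤ) then lev r m.toNat else 0) r ((k:ℤ)+2)
        / B r r ((k:ℤ)+2)
  decreasing_by exact by omega

noncomputable def aZ (r : ℕ) (n : ℤ) : ℂ := if 0 ≤ n then lev r n.toNat else 0

theorem lev_zero (r : ℕ) : lev r 0 = 1 := by rw [lev]

theorem lev_succ (r : ℕ) (k : ℕ) :
    lev r (k+1) = - G r (fun m => if m ≤ (k:ℤ) then aZ r m else 0) r ((k:ℤ)+2)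
        / B r r ((k:ℤ)+2) := by
  have hf : (fun m => if h : 0 ≤ m ∧ m ≤ (k:ℤ) then lev r m.toNat else 0)
      = (fun m => if m ≤ (k:ℤ) then aZ r m else 0) := by
    funext m
    by_cases h0 : 0 ≤ m
    · by_cases h1 : m ≤ (k:ℤ)
      · rw [dif_pos ⟨h0, h1⟩, if_pos h1, aZ, if_pos h0]
      · rw [dif_neg (by omega), if_neg h1]
    · rw [dif_neg (by omega)]
      by_cases h1 : m ≤ (k:ℤ)
      · rw [if_pos h1, aZ, if_neg h0]
      · rw [if_neg h1]
  rw [lev, hf]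

theorem central (r : ℕ) (hr : 2 ≤ r) (n : ℤ) :
    B r r n * aZ r (n-1) + G r (fun m => if m ≤ n-2 then aZ r m else 0) r n = 0 := by
  rcases le_or_gt n 1 with hn | hn
  · have hG : G r (fun m => if m ≤ n-2 then aZ r m else 0) r n = 0 := by
      apply G_of_zero
      intro m _ _
      by_cases h1 : m ≤ n-2
      · rw [if_pos h1, aZ, if_neg (by omega)]
      · rw [if_neg h1]
    rw [hG, add_zero]
    rcases lt_or_eq_of_le hn with hn1 | hn1
    · rw [aZ, if_neg (by omega), mul_zero]
    · subst hn1
      rw [B_eq]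
      norm_num
  · obtain ⟨k, hk⟩ : ∃ k : ℕ, n = (k:ℤ)+2 := ⟨(n-2).toNat, by omega⟩
    subst hk
    have h1 : aZ r ((k:ℤ)+2-1) = lev r (k+1) := by
      rw [aZ, if_pos (by omega)]
      congr 1
      omega
    have h2 : ((k:ℤ)+2) - 2 = (k:ℤ) := by ring
    rw [h1, h2, lev_succ]
    have hB := B_ne r hr (n := (k:ℤ)+2) (by omega)
    field_simp
    ring

/-- coefficient function of the solution series. -/
noncomputable def Afun (r : ℕ) (m : ℤ) : ℂ :=
  if ((r:ℤ)+1) ∣ m then aZ r (m / ((r:ℤ)+1)) else 0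

theorem Afun_mul (r : ℕ) (n : ℤ) : Afun r (((r:ℤ)+1)*n) = aZ r n := by
  rw [Afun, if_pos (dvd_mul_right _ _), Int.mul_ediv_cancel_left _ (by omega)]

theorem Afun_neg (r : ℕ) (m : ℤ) (hm : m < 0) : Afun r m = 0 := by
  rw [Afun]
  split
  · rename_i h
    obtain ⟨q, hq⟩ := h
    rw [hq, Int.mul_ediv_cancel_left _ (by omega), aZ,
      if_neg (by nlinarith [hq ▸ hm])]
  · rfl

/-- The solution as a Laurent series. -/
noncomputable def Aser (r : ℕ) : LaurentSeries ℂ where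
  coeff := Afun r
  isPWO_support' := by
    have hsub : Function.support (Afun r) ⊆ Set.Ici (0:ℤ) := by
      intro m hm
      simp only [Function.mem_support] at hm
      by_contra hneg
      exact hm (Afun_neg r m (by simpa using hneg))
    exact (Set.IsWF.mono (BddBelow.wellFoundedOn_lt bddBelow_Ici : (Set.Ici (0:ℤ)).IsWF) hsub).isPWO

theorem Sop_coeff (r : ℕ) (f : LaurentSeries ℂ) (m : ℤ) :
    (Sop r f).coeff m
      = (((r:ℂ) + 1) / 2 - (m:ℂ)) * f.coeff (m - (r:ℤ)) - f.coeff (m+1) := rfl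

theorem bridge (r : ℕ) (A : LaurentSeries ℂ)
    (hA : ∀ m : ℤ, (¬ ∃ n : ℤ, m = ((r:ℤ)+1) * n) → A.coeff m = 0) : ∀ j : ℕ,
    (∀ n : ℤ, ((Sop r)^[j] A).coeff (((r:ℤ)+1)*n - (j:ℤ))
        = G r (fun i => A.coeff (((r:ℤ)+1)*i)) j n)
    ∧ (∀ m : ℤ, (¬ ∃ n : ℤ, m = ((r:ℤ)+1)*n - (j:ℤ)) → ((Sop r)^[j] A).coeff m = 0)
  | 0 => by
      constructor
      · intro n
        simp [G]
      · intro m hm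
        simp only [Function.iterate_zero_apply]
        exact hA m (fun ⟨n, hn⟩ => hm ⟨n, by omega⟩)
  | (j+1) => by
      obtain ⟨IH1, IH2⟩ := bridge r A hA j
      constructor
      · intro n
        rw [Function.iterate_succ_apply', Sop_coeff]
        have e1 : ((r:ℤ)+1)*n - ((j:ℕ)+1:ℤ) - (r:ℤ) = ((r:ℤ)+1)*(n-1) - (j:ℤ) := by ring
        have e2 : ((r:ℤ)+1)*n - ((j:ℕ)+1:ℤ) + 1 = ((r:ℤ)+1)*n - (j:ℤ) := by ring
        push_cast
        push_cast at e1 e2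
        rw [e1, e2, IH1 (n-1), IH1 n, G]
        push_cast
        ring
      · intro m hm
        rw [Function.iterate_succ_apply', Sop_coeff]
        have h1 : ((Sop r)^[j] A).coeff (m - (r:ℤ)) = 0 := by
          apply IH2
          rintro ⟨n, hn⟩
          exact hm ⟨n+1, by push_cast; linear_combination hn⟩
        have h2 : ((Sop r)^[j] A).coeff (m + 1) = 0 := by
          apply IH2
          rintro ⟨n, hn⟩
          exact hm ⟨n, by push_cast; linear_combination hn⟩
        rw [h1, h2, mul_zero, sub_zero]

theorem rhs_coeff (r : ℕ) (x : LaurentSeries ℂ) (m : ℤ) :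
    (((-1:ℂ)^r) • (HahnSeries.single (-(r:ℤ)) 1 * x)).coeff m
      = (-1:ℂ)^r * x.coeff (m + r) := by
  rw [HahnSeries.coeff_smul, smul_eq_mul]
  congr 1
  conv_lhs => rw [show m = (m + (r:ℤ)) + (-(r:ℤ)) by ring]
  rw [coeff_single_mul_add, one_mul]

theorem aZ_nonneg (r : ℕ) (k : ℕ) : aZ r (k:ℤ) = lev r k := by
  rw [aZ, if_pos (by omega)]
  simp

end AHelp

theorem exists_unique_a' (r : ℕ) (hr : 2 ≤ r) :
    ∃! a : LaurentSeries ℂ,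
      (a.coeff 0 = 1 ∧ ∀ m : ℤ, a.coeff m ≠ 0 → ∃ k : ℕ, m = ((r : ℤ) + 1) * k) ∧
      (Sop r)^[r] a = ((-1 : ℂ) ^ r) • (HahnSeries.single (-(r : ℤ)) 1 * a) := by
  classical
  have hrne : ((r:ℤ)+1) ≠ 0 := by omega
  -- basic facts about Aser
  have hAco : ∀ m : ℤ, (AHelp.Aser r).coeff m = AHelp.Afun r m := fun m => rfl
  have hA : ∀ m : ℤ, (¬ ∃ n : ℤ, m = ((r:ℤ)+1) * n) → (AHelp.Aser r).coeff m = 0 := by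
    intro m hm
    rw [hAco, AHelp.Afun, if_neg]
    rintro ⟨q, hq⟩
    exact hm ⟨q, hq⟩
  obtain ⟨Br1, Br2⟩ := AHelp.bridge r (AHelp.Aser r) hA r
  have hcoe : (fun i => (AHelp.Aser r).coeff (((r:ℤ)+1)*i)) = AHelp.aZ r := by
    funext i; exact AHelp.Afun_mul r i
  refine ⟨AHelp.Aser r, ⟨⟨?_, ?_⟩, ?_⟩, ?_⟩
  · -- coeff 0 = 1
    have h := AHelp.Afun_mul r 0
    rw [mul_zero] at h
    have h0 := AHelp.aZ_nonneg r 0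
    norm_num at h0
    rw [hAco, h, h0, AHelp.lev_zero]
  · -- support
    intro m hm
    rcases lt_or_ge m 0 with hneg | hpos
    · exact absurd (AHelp.Afun_neg r m hneg) (by rw [hAco] at hm; exact hm)
    · rw [hAco, AHelp.Afun] at hm
      by_cases hd : ((r:ℤ)+1) ∣ m
      · obtain ⟨q, hq⟩ := hd
        have hq0 : 0 ≤ q := by nlinarith [hq ▸ hpos]
        exact ⟨q.toNat, by rw [Int.toNat_of_nonneg hq0]; exact hq⟩
      · rw [if_neg hd] at hm
        exact absurd rfl hm
  · -- the equation
    apply HahnSeries.ext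
    funext m
    rw [AHelp.rhs_coeff]
    by_cases hm : ∃ n : ℤ, m = ((r:ℤ)+1)*n - (r:ℤ)
    · obtain ⟨n, hn⟩ := hm
      subst hn
      rw [Br1 n, hcoe, AHelp.G_split]
      have hc := AHelp.central r hr n
      have he : ((r:ℤ)+1)*n - (r:ℤ) + (r:ℤ) = ((r:ℤ)+1)*n := by ring
      rw [he, hAco, AHelp.Afun_mul]
      linear_combination hc
    · rw [Br2 m hm]
      have : (AHelp.Aser r).coeff (m + (r:ℤ)) = 0 := by
        rw [hAco, AHelp.Afun, if_neg]
        rintro ⟨q, hq⟩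
        exact hm ⟨q, by omega⟩
      rw [this, mul_zero]
  · -- uniqueness
    rintro b ⟨⟨hb0, hbs⟩, hbeq⟩
    have hbnd : ∀ m : ℤ, (¬ ∃ n : ℤ, m = ((r:ℤ)+1)*n) → b.coeff m = 0 := by
      intro m hm
      by_contra h
      obtain ⟨k, hk⟩ := hbs m h
      exact hm ⟨(k:ℤ), hk⟩
    set bZ : ℤ → ℂ := fun n => b.coeff (((r:ℤ)+1)*n) with hbZ
    have hbneg : ∀ n : ℤ, n < 0 → bZ n = 0 := by
      intro n hn
      by_contra h
      obtain ⟨k, hk⟩ := hbs _ h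
      have : n = (k:ℤ) := mul_left_cancel₀ hrne hk
      omega
    obtain ⟨Bb1, Bb2⟩ := AHelp.bridge r b hbnd r
    have heqn : ∀ n : ℤ, AHelp.B r r n * bZ (n-1)
        + AHelp.G r (fun m => if m ≤ n-2 then bZ m else 0) r n = 0 := by
      intro n
      have h1 : ((Sop r)^[r] b).coeff (((r:ℤ)+1)*n - (r:ℤ))
          = (((-1:ℂ)^r) • (HahnSeries.single (-(r:ℤ)) 1 * b)).coeff (((r:ℤ)+1)*n - (r:ℤ)) := by
        rw [hbeq]
      rw [Bb1 n, AHelp.rhs_coeff, AHelp.G_split] at h1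
      have he : ((r:ℤ)+1)*n - (r:ℤ) + (r:ℤ) = ((r:ℤ)+1)*n := by ring
      rw [he] at h1
      linear_combination h1
    have hlev : ∀ k : ℕ, bZ (k:ℤ) = AHelp.lev r k := by
      intro k
      induction k using Nat.strong_induction_on with
      | _ k IH =>
        match k with
        | 0 =>
            have h : bZ ((0:ℕ):ℤ) = b.coeff 0 := by rw [hbZ]; norm_num
            rw [h, hb0, AHelp.lev_zero]
        | (k+1) =>
            have hfun : (fun m => if m ≤ ((k:ℤ)+2)-2 then bZ m else 0)
                = (fun m => if m ≤ (k:ℤ) then AHelp.aZ r m else 0) := by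
              funext m
              have h2 : ((k:ℤ)+2)-2 = (k:ℤ) := by ring
              rw [h2]
              by_cases h1 : m ≤ (k:ℤ)
              · rw [if_pos h1, if_pos h1]
                rcases lt_or_ge m 0 with h0 | h0
                · rw [hbneg m h0, AHelp.aZ, if_neg (by omega)]
                · have hm : m = ((m.toNat : ℕ) : ℤ) := (Int.toNat_of_nonneg h0).symm
                  rw [hm, IH m.toNat (by omega), AHelp.aZ_nonneg]
              · rw [if_neg h1, if_neg h1]
            have h := heqn ((k:ℤ)+2)
            rw [hfun] at h
            have hc := AHelp.central r hr ((k:ℤ)+2)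
            have h2 : ((k:ℤ)+2)-2 = (k:ℤ) := by ring
            rw [h2] at hc
            have hsub : AHelp.B r r ((k:ℤ)+2) * (bZ ((k:ℤ)+2-1) - AHelp.aZ r ((k:ℤ)+2-1)) = 0 := by
              linear_combination h - hc
            have hB := AHelp.B_ne r hr (n := (k:ℤ)+2) (by omega)
            have h3 : bZ ((k:ℤ)+2-1) = AHelp.aZ r ((k:ℤ)+2-1) := by
              rcases mul_eq_zero.mp hsub with h4 | h4
              · exact absurd h4 hB
              · exact sub_eq_zero.mp h4
            have h4 : ((k:ℤ)+2-1) = ((k+1 : ℕ) : ℤ) := by push_cast; ring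
            rw [h4] at h3
            rw [h3, AHelp.aZ_nonneg]
    -- conclude b = Aser r
    apply HahnSeries.ext
    funext m
    rw [hAco]
    by_cases hd : ((r:ℤ)+1) ∣ m
    · obtain ⟨q, hq⟩ := hd
      subst hq
      rw [AHelp.Afun_mul]
      rcases lt_or_ge q 0 with h0 | h0
      · rw [show b.coeff (((r:ℤ)+1)*q) = bZ q from rfl, hbneg q h0,
          AHelp.aZ, if_neg (by omega)]
      · have hq2 : q = ((q.toNat : ℕ) : ℤ) := (Int.toNat_of_nonneg h0).symm
        rw [show b.coeff (((r:ℤ)+1)*q) = bZ q from rfl, hq2, hlev q.toNat, AHelp.aZ_nonneg]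
    · rw [hbnd m (fun ⟨n, hn⟩ => hd ⟨n, hn⟩), AHelp.Afun, if_neg hd]

/-- There exists a unique formal series `a(z) = 1 + Σ_{k≥1} a_k z^{-(r+1)k}`
with `S_z^r a = (-z)^r a`.  (`coeff m` is the coefficient of `z^{-m}`, so the
support condition reads `m = (r+1)k`, `k ∈ ℕ`, and `(-z)^r a = (-1)^r z^r a`
with `z^r = single (-r) 1`.) -/
theorem exists_unique_a (r : ℕ) (hr : 2 ≤ r) :
    ∃! a : LaurentSeries ℂ,
      (a.coeff 0 = 1 ∧ ∀ m : ℤ, a.coeff m ≠ 0 → ∃ k : ℕ, m = ((r : ℤ) + 1) * k) ∧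
      (Sop r)^[r] a = ((-1 : ℂ) ^ r) • (HahnSeries.single (-(r : ℤ)) 1 * a) := by
  exact exists_unique_a' r hr
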